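/- Let T be a rooted tree with m leaves labeled by vectors y₁,…,y_m ∈ {0,1}ⁿ, internal labels z_v = ⋁_{ℓ under v} y_ℓ, and cost c(T) = n + Σ_v ‖z_v‖₁ deg(v). Then for any tree T: c(T) ≥ n + Σ_{j=1}^m ‖y_j‖₁. Consequently, a complete ternary tree T₃ of depth ⌈log₃ m⌉ with the leaves assigned arbitrarily satisfies c(T₃) ≤ n + 3⌈log₃ m⌉ Σⱼ ‖yⱼ‖₁ ≤ (3 log₂ m / log₂ 3) · min_T c(T) for m ≥ 2. -/

import Mathlib

/-- A rooted tree with leaves labeled by `α`. -/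
inductive RTree (α : Type) where
  | leaf : α → RTree α
  | node : List (RTree α) → RTree α

namespace RTree

/-- The list of leaf labels of a tree. -/
def leaves {α : Type} : RTree α → List α
  | .leaf a => [a]
  | .node ts => (ts.attach.map (fun ⟨t, _⟩ => t.leaves)).flatten

/-- Depth of the tree: maximum number of edges on a root-to-leaf path. -/
def depth {α : Type} : RTree α → ℕ
  | .leaf _ => 0
  | .node ts => 1 + (ts.attach.map (fun ⟨t, _⟩ => t.depth)).foldr max 0

/-- Maximum degree (number of children) over all nodes. -/
def maxdeg {α : Type} : RTree α → ℕ
  | .leaf _ => 0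
  | .node ts => max ts.length ((ts.attach.map (fun ⟨t, _⟩ => t.maxdeg)).foldr max 0)

end RTree

/-- Hamming weight of a binary vector. -/
def hw {n : ℕ} (z : Fin n → Bool) : ℕ := (Finset.univ.filter (fun i => z i = true)).card

/-- Coordinatewise OR of a list of binary vectors. -/
def orv {n : ℕ} (ys : List (Fin n → Bool)) : Fin n → Bool := fun i => ys.any (fun y => y i)

/-- `∑_{v ∈ V(T)} ‖z_v‖₁ · deg(v)`, where `z_v` is the OR of the leaf labels below `v`
and `deg(v)` the number of children of `v` (0 for leaves). -/
def RTree.cost {n : ℕ} : RTree (Fin n → Bool) → ℕ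
  | .leaf _ => 0
  | .node ts => hw (orv (RTree.leaves (.node ts))) * ts.length
      + (ts.attach.map (fun ⟨t, _⟩ => t.cost)).sum

-- basic rewriting lemmas
lemma leaves_node {α : Type} (ts : List (RTree α)) :
    (RTree.node ts).leaves = (ts.map RTree.leaves).flatten := by simp [RTree.leaves]
lemma depth_node {α : Type} (ts : List (RTree α)) :
    (RTree.node ts).depth = 1 + (ts.map RTree.depth).foldr max 0 := by simp [RTree.depth]
lemma maxdeg_node {α : Type} (ts : List (RTree α)) :
    (RTree.node ts).maxdeg = max ts.length ((ts.map RTree.maxdeg).foldr max 0) := by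
  simp [RTree.maxdeg]
lemma cost_node {n : ℕ} (ts : List (RTree (Fin n → Bool))) :
    (RTree.node ts).cost = hw (orv ((ts.map RTree.leaves).flatten)) * ts.length
      + (ts.map RTree.cost).sum := by
  simp [RTree.cost, leaves_node]

-- hw/orv lemmas
lemma hw_le {n : ℕ} (z : Fin n → Bool) : hw z ≤ n := by
  classical
  calc hw z ≤ Finset.univ.card := Finset.card_filter_le _ _
  _ = n := by simp

lemma hw_orv_mono {n : ℕ} {l₁ l₂ : List (Fin n → Bool)} (h : ∀ a ∈ l₁, a ∈ l₂) :
    hw (orv l₁) ≤ hw (orv l₂) := by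
  classical
  apply Finset.card_le_card
  intro i hi
  simp only [Finset.mem_filter, Finset.mem_univ, true_and, orv, List.any_eq_true] at hi ⊢
  obtain ⟨y, hy, hyi⟩ := hi
  exact ⟨y, h y hy, hyi⟩

lemma hw_orv_le_sum {n : ℕ} (l : List (Fin n → Bool)) : hw (orv l) ≤ (l.map hw).sum := by
  classical
  induction l with
  | nil => simp [orv, hw]
  | cons y l ih =>
      have h1 : hw (orv (y :: l)) ≤ hw y + hw (orv l) := by
        have hsub : (Finset.univ.filter (fun i => orv (y :: l) i = true)) ⊆
            (Finset.univ.filter (fun i => y i = true)) ∪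
            (Finset.univ.filter (fun i => orv l i = true)) := by
          intro i hi
          simp only [Finset.mem_filter, Finset.mem_univ, true_and, Finset.mem_union,
            orv, List.any_cons, Bool.or_eq_true] at hi ⊢
          simpa using hi
        calc hw (orv (y :: l)) ≤ _ := Finset.card_le_card hsub
          _ ≤ hw y + hw (orv l) := Finset.card_union_le _ _
      simp only [List.map_cons, List.sum_cons]
      omega

-- lower bound
lemma low_node {n : ℕ} (ts : List (RTree (Fin n → Bool)))
    (IH : ∀ t ∈ ts, ((RTree.leaves t).map hw).sum ≤ t.cost + hw (orv t.leaves)) :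
    (((RTree.node ts).leaves).map hw).sum ≤ (RTree.node ts).cost := by
  classical
  rw [leaves_node, cost_node]
  simp only [List.map_flatten, List.sum_flatten, List.map_map, Function.comp_def]
  have h1 : ((ts.map fun t => ((RTree.leaves t).map hw).sum).sum : ℕ) ≤
      (ts.map fun t => t.cost + hw (orv t.leaves)).sum := by
    apply List.sum_le_sum
    intro t ht
    exact IH t ht
  have h2 : (ts.map fun t => t.cost + hw (orv t.leaves)).sum =
      (ts.map RTree.cost).sum + (ts.map fun t => hw (orv t.leaves)).sum := by
    rw [← List.sum_map_add]
  have h3 : (ts.map fun t => hw (orv t.leaves)).sum ≤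
      ts.length * hw (orv ((ts.map RTree.leaves).flatten)) := by
    have := List.sum_le_card_nsmul (ts.map fun t => hw (orv t.leaves))
      (hw (orv ((ts.map RTree.leaves).flatten))) ?_
    · simpa using this
    · intro x hx
      simp only [List.mem_map] at hx
      obtain ⟨t, ht, rfl⟩ := hx
      apply hw_orv_mono
      intro a ha
      rw [List.mem_flatten]
      exact ⟨t.leaves, List.mem_map_of_mem ht, ha⟩
  calc (ts.map fun t => ((RTree.leaves t).map hw).sum).sum
      ≤ _ := h1
    _ = _ := h2
    _ ≤ (ts.map RTree.cost).sum + ts.length * hw (orv ((ts.map RTree.leaves).flatten)) :=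
        Nat.add_le_add_left h3 _
    _ = _ := by ring
lemma low {n : ℕ} (t : RTree (Fin n → Bool)) :
    ((t.leaves).map hw).sum ≤ t.cost + hw (orv t.leaves) := by
  refine RTree.rec (motive_1 := fun t => ((t.leaves).map hw).sum ≤ t.cost + hw (orv t.leaves))
    (motive_2 := fun ts => ∀ t ∈ ts, ((t.leaves).map hw).sum ≤ t.cost + hw (orv t.leaves))
    ?_ ?_ ?_ ?_ t
  · intro a
    simp [RTree.leaves, RTree.cost, orv, hw]
  · intro ts ih
    exact le_trans (low_node ts ih) (Nat.le_add_right _ _)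
  · intro t ht; simp at ht
  · intro hd tl hhd htl t ht
    rcases List.mem_cons.mp ht with rfl | ht
    · exact hhd
    · exact htl t ht

-- the balanced ternary construction
def build {α : Type} : ℕ → List α → RTree α
  | 0, [] => .node []
  | 0, [a] => .leaf a
  | 0, l => .node (l.map .leaf)
  | d+1, l =>
    if l.length ≤ 3^d then build d l
    else if l.length ≤ 2 * 3^d then
      .node [build d (l.take (3^d)), build d (l.drop (3^d))]
    else
      .node [build d (l.take (3^d)), build d ((l.drop (3^d)).take (3^d)),
             build d ((l.drop (3^d)).drop (3^d))]

lemma build_leaves {α : Type} : ∀ (d : ℕ) (l : List α), (build d l).leaves = l := by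
  intro d
  induction d with
  | zero =>
      intro l
      match l with
      | [] => simp [build, leaves_node]
      | [a] => simp [build, RTree.leaves]
      | a :: b :: l =>
          show (RTree.node ((a :: b :: l).map .leaf)).leaves = _
          rw [leaves_node, List.map_map]
          have : (RTree.leaves ∘ fun a => (RTree.leaf a : RTree α)) = fun a => [a] := by
            funext a; simp [RTree.leaves]
          rw [this, ← List.flatMap_def, List.flatMap_singleton']
  | succ d ih =>
      intro l
      show (if l.length ≤ 3^d then build d l
        else if l.length ≤ 2 * 3^d then
          RTree.node [build d (l.take (3^d)), build d (l.drop (3^d))]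
        else
          RTree.node [build d (l.take (3^d)), build d ((l.drop (3^d)).take (3^d)),
             build d ((l.drop (3^d)).drop (3^d))]).leaves = l
      split
      · exact ih l
      split
      · rw [leaves_node]; simp [ih, List.take_append_drop]
      · rw [leaves_node]; simp [ih, List.take_append_drop]

lemma build_maxdeg {α : Type} : ∀ (d : ℕ) (l : List α), l.length ≤ 3^d →
    (build d l).maxdeg ≤ 3 := by
  intro d
  induction d with
  | zero =>
      intro l hl
      match l with
      | [] => simp [build, maxdeg_node]
      | [a] => simp [build, RTree.maxdeg]
      | a :: b :: l => simp at hl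
  | succ d ih =>
      intro l hl
      show (if l.length ≤ 3^d then build d l
        else if l.length ≤ 2 * 3^d then
          RTree.node [build d (l.take (3^d)), build d (l.drop (3^d))]
        else
          RTree.node [build d (l.take (3^d)), build d ((l.drop (3^d)).take (3^d)),
             build d ((l.drop (3^d)).drop (3^d))]).maxdeg ≤ 3
      have h3 : (0:ℕ) < 3 ^ d := Nat.pow_pos (by norm_num)
      have hpow : (3:ℕ)^(d+1) = 3 * 3^d := by ring
      split
      · exact ih l (by assumption)
      split
      · rw [maxdeg_node]
        simp only [List.map_cons, List.map_nil, List.foldr]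
        have m1 := ih (l.take (3^d)) (by simp)
        have m2 := ih (l.drop (3^d)) (by simp; omega)
        simp only [List.length_cons, List.length_nil]
        omega
      · rw [maxdeg_node]
        simp only [List.map_cons, List.map_nil, List.foldr]
        have m1 := ih (l.take (3^d)) (by simp)
        have m2 := ih ((l.drop (3^d)).take (3^d)) (by simp)
        have m3 := ih ((l.drop (3^d)).drop (3^d)) (by simp; omega)
        simp only [List.length_cons, List.length_nil]
        omega

lemma build_depth {α : Type} : ∀ (d : ℕ) (l : List α), l ≠ [] → l.length ≤ 3^d →
    (build d l).depth ≤ d := by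
  intro d
  induction d with
  | zero =>
      intro l hne hl
      match l with
      | [] => exact absurd rfl hne
      | [a] => simp [build, RTree.depth]
      | a :: b :: l => simp at hl
  | succ d ih =>
      intro l hne hl
      show (if l.length ≤ 3^d then build d l
        else if l.length ≤ 2 * 3^d then
          RTree.node [build d (l.take (3^d)), build d (l.drop (3^d))]
        else
          RTree.node [build d (l.take (3^d)), build d ((l.drop (3^d)).take (3^d)),
             build d ((l.drop (3^d)).drop (3^d))]).depth ≤ d + 1
      have h3 : (0:ℕ) < 3 ^ d := Nat.pow_pos (by norm_num)
      have hpow : (3:ℕ)^(d+1) = 3 * 3^d := by ring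
      have hlen : 1 ≤ l.length := by
        cases l with
        | nil => exact absurd rfl hne
        | cons a l => simp
      split
      · exact le_trans (ih l hne (by assumption)) (Nat.le_succ d)
      split
      · rw [depth_node]
        simp only [List.map_cons, List.map_nil, List.foldr]
        have m1 := ih (l.take (3^d)) (by rw [← List.length_pos_iff_ne_nil]; simp; omega) (by simp)
        have m2 := ih (l.drop (3^d)) (by rw [← List.length_pos_iff_ne_nil]; simp; omega) (by simp; omega)
        omega
      · rw [depth_node]
        simp only [List.map_cons, List.map_nil, List.foldr]
        have m1 := ih (l.take (3^d)) (by rw [← List.length_pos_iff_ne_nil]; simp; omega) (by simp)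
        have m2 := ih ((l.drop (3^d)).take (3^d))
          (by rw [← List.length_pos_iff_ne_nil]; simp; omega) (by simp)
        have m3 := ih ((l.drop (3^d)).drop (3^d))
          (by rw [← List.length_pos_iff_ne_nil]; simp; omega) (by simp; omega)
        omega

lemma sum_split {n : ℕ} (l : List (Fin n → Bool)) (k : ℕ) :
    ((l.take k).map hw).sum + ((l.drop k).map hw).sum = (l.map hw).sum := by
  rw [← List.sum_append, ← List.map_append, List.take_append_drop]

lemma build_cost {n : ℕ} : ∀ (d : ℕ) (l : List (Fin n → Bool)), l.length ≤ 3^d →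
    (build d l).cost ≤ 3 * d * (l.map hw).sum := by
  intro d
  induction d with
  | zero =>
      intro l hl
      match l with
      | [] => simp [build, RTree.cost]
      | [a] => simp [build, RTree.cost]
      | a :: b :: l => simp at hl
  | succ d ih =>
      intro l hl
      show (if l.length ≤ 3^d then build d l
        else if l.length ≤ 2 * 3^d then
          RTree.node [build d (l.take (3^d)), build d (l.drop (3^d))]
        else
          RTree.node [build d (l.take (3^d)), build d ((l.drop (3^d)).take (3^d)),
             build d ((l.drop (3^d)).drop (3^d))]).cost ≤ 3 * (d+1) * (l.map hw).sum
      have h3 : (0:ℕ) < 3 ^ d := Nat.pow_pos (by norm_num)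
      have hpow : (3:ℕ)^(d+1) = 3 * 3^d := by ring
      have hH : hw (orv l) ≤ (l.map hw).sum := hw_orv_le_sum l
      split
      · calc (build d l).cost ≤ 3 * d * (l.map hw).sum := ih l (by assumption)
          _ ≤ 3 * (d+1) * (l.map hw).sum := by
              apply Nat.mul_le_mul_right; omega
      split
      · rw [cost_node]
        simp only [List.map_cons, List.map_nil, List.flatten, List.sum_cons, List.sum_nil,
          build_leaves, List.length_cons, List.length_nil, List.append_eq, List.append_nil]
        rw [List.take_append_drop]
        have m1 := ih (l.take (3^d)) (by simp)
        have m2 := ih (l.drop (3^d)) (by simp; omega)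
        have hs := sum_split l (3^d)
        nlinarith [hH, m1, m2]
      · rw [cost_node]
        simp only [List.map_cons, List.map_nil, List.flatten, List.sum_cons, List.sum_nil,
          build_leaves, List.length_cons, List.length_nil, List.append_eq, List.append_nil]
        rw [List.take_append_drop, List.take_append_drop]
        have m1 := ih (l.take (3^d)) (by simp)
        have m2 := ih ((l.drop (3^d)).take (3^d)) (by simp)
        have m3 := ih ((l.drop (3^d)).drop (3^d)) (by simp; omega)
        have hs1 := sum_split (l.drop (3^d)) (3^d)
        have hs := sum_split l (3^d)
        nlinarith [hH, m1, m2, m3]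

lemma build_cost' {n : ℕ} (d : ℕ) (l : List (Fin n → Bool)) (hl : l.length ≤ 3^(d+1)) :
    (build (d+1) l).cost ≤ 3 * hw (orv l) + 3 * d * (l.map hw).sum := by
  show (if l.length ≤ 3^d then build d l
    else if l.length ≤ 2 * 3^d then
      RTree.node [build d (l.take (3^d)), build d (l.drop (3^d))]
    else
      RTree.node [build d (l.take (3^d)), build d ((l.drop (3^d)).take (3^d)),
         build d ((l.drop (3^d)).drop (3^d))]).cost ≤ _
  have h3 : (0:ℕ) < 3 ^ d := Nat.pow_pos (by norm_num)
  have hpow : (3:ℕ)^(d+1) = 3 * 3^d := by ring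
  split
  · calc (build d l).cost ≤ 3 * d * (l.map hw).sum := build_cost d l (by assumption)
      _ ≤ _ := Nat.le_add_left _ _
  split
  · rw [cost_node]
    simp only [List.map_cons, List.map_nil, List.flatten, List.sum_cons, List.sum_nil,
      build_leaves, List.length_cons, List.length_nil, List.append_eq, List.append_nil]
    rw [List.take_append_drop]
    have m1 := build_cost d (l.take (3^d)) (by simp)
    have m2 := build_cost d (l.drop (3^d)) (by simp; omega)
    have hs := sum_split l (3^d)
    have hc : 3*d*((l.take (3^d)).map hw).sum + 3*d*((l.drop (3^d)).map hw).sum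
        = 3*d*(l.map hw).sum := by rw [← hs]; ring
    omega
  · rw [cost_node]
    simp only [List.map_cons, List.map_nil, List.flatten, List.sum_cons, List.sum_nil,
      build_leaves, List.length_cons, List.length_nil, List.append_eq, List.append_nil]
    rw [List.take_append_drop, List.take_append_drop]
    have m1 := build_cost d (l.take (3^d)) (by simp)
    have m2 := build_cost d ((l.drop (3^d)).take (3^d)) (by simp)
    have m3 := build_cost d ((l.drop (3^d)).drop (3^d)) (by simp; omega)
    have hs1 := sum_split (l.drop (3^d)) (3^d)
    have hs := sum_split l (3^d)
    have hc : 3*d*((l.take (3^d)).map hw).sum + 3*d*(((l.drop (3^d)).take (3^d)).map hw).sum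
        + 3*d*(((l.drop (3^d)).drop (3^d)).map hw).sum = 3*d*(l.map hw).sum := by
      rw [← hs, ← hs1]; ring
    omega

-- real log helpers
lemma q_le_R {q : ℝ} (m : ℕ) (h : q * Real.log 3 ≤ 3 * Real.log m) :
    q ≤ 3 * Real.logb 2 m / Real.logb 2 3 := by
  have hlog3 : (0:ℝ) < Real.log 3 := Real.log_pos (by norm_num)
  have hlog2 : (0:ℝ) < Real.log 2 := Real.log_pos (by norm_num)
  have hR : 3 * Real.logb 2 m / Real.logb 2 3 = 3 * Real.log m / Real.log 3 := by
    rw [Real.logb, Real.logb]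
    field_simp
  rw [hR, le_div_iff₀ hlog3]
  linarith

lemma pow_log_le {a : ℕ} {m : ℕ} (hm : 0 < m) (h : 3^a ≤ m) :
    (a:ℝ) * Real.log 3 ≤ Real.log m := by
  have h1 : ((3:ℝ))^a ≤ (m:ℝ) := by
    calc ((3:ℝ))^a = ((3^a : ℕ) : ℝ) := by push_cast; ring
      _ ≤ (m:ℝ) := by exact_mod_cast h
  have := (Real.log_le_log_iff (by positivity) (by exact_mod_cast hm)).mpr h1
  rwa [Real.log_pow] at this

/-- Lower bound `c(T) ≥ n + ∑ⱼ ‖yⱼ‖₁` for every tree on the given `m ≥ 2` leaf labels,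
and a complete ternary tree `T₃` (degrees ≤ 3, depth ≤ ⌈log₃ m⌉) achieves
`c(T₃) ≤ n + 3⌈log₃ m⌉ ∑ⱼ ‖yⱼ‖₁ ≤ (3·log₂ m / log₂ 3)·min_T c(T)`. -/
theorem stmt_11 (n : ℕ) (ys : List (Fin n → Bool)) (hm : 2 ≤ ys.length) :
    (∀ t : RTree (Fin n → Bool), t.leaves.Perm ys →
        n + (ys.map hw).sum ≤ n + t.cost) ∧
    ∃ t₃ : RTree (Fin n → Bool), t₃.leaves.Perm ys ∧ t₃.maxdeg ≤ 3 ∧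
        t₃.depth ≤ Nat.clog 3 ys.length ∧
        n + t₃.cost ≤ n + 3 * Nat.clog 3 ys.length * (ys.map hw).sum ∧
        ∀ t : RTree (Fin n → Bool), t.leaves.Perm ys →
          ((n : ℝ) + t₃.cost) ≤
            (3 * Real.logb 2 ys.length / Real.logb 2 3) * ((n : ℝ) + t.cost) := by
  classical
  have h13 : (1:ℕ) < 3 := by norm_num
  have hlow : ∀ t : RTree (Fin n → Bool), t.leaves.Perm ys → (ys.map hw).sum ≤ t.cost := by
    intro t hp
    cases t with
    | leaf a =>
        have := hp.length_eq
        simp [RTree.leaves] at this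
        omega
    | node ts =>
        have h1 := low_node ts (fun t _ => low t)
        have h2 : (((RTree.node ts).leaves).map hw).sum = (ys.map hw).sum :=
          (hp.map hw).sum_eq
        omega
  constructor
  · intro t hp
    exact Nat.add_le_add_left (hlow t hp) n
  · set d := Nat.clog 3 ys.length with hd
    clear_value d
    have hysd : ys.length ≤ 3 ^ d := by rw [hd]; exact Nat.le_pow_clog h13 ys.length
    have hne : ys ≠ [] := by
      intro h; rw [h] at hm; simp at hm
    have hd1 : 1 ≤ d := by
      by_contra h
      have hd0 : d = 0 := by omega
      rw [hd0] at hysd; simp at hysd; omega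
    refine ⟨build d ys, ?_, build_maxdeg d ys hysd, build_depth d ys hne hysd,
      Nat.add_le_add_left (build_cost d ys hysd) n, ?_⟩
    · rw [build_leaves]
    · intro t hp
      have hHn : hw (orv ys) ≤ n := hw_le _
      have hHS : hw (orv ys) ≤ (ys.map hw).sum := hw_orv_le_sum ys
      have hSC : (ys.map hw).sum ≤ t.cost := hlow t hp
      have hx : (0:ℝ) ≤ (n:ℝ) + t.cost := by positivity
      by_cases hm2 : ys.length = 2
      · -- m = 2
        obtain ⟨a, b, rfl⟩ := List.length_eq_two.mp hm2
        have hd2 : d = 1 := by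
          have : d ≤ 1 := by
            rw [hd]
            exact (Nat.clog_le_iff_le_pow h13).symm.mp (by simp)
          omega
        have hbuild : build d [a, b] = RTree.node [.leaf a, .leaf b] := by
          rw [hd2]; rfl
        have hcost : (build d [a,b]).cost = hw (orv [a,b]) * 2 := by
          rw [hbuild, cost_node]
          simp [RTree.leaves, RTree.cost]
        have hq : (9/5 : ℝ) ≤ 3 * Real.logb 2 (List.length [a,b]) / Real.logb 2 3 := by
          apply q_le_R
          have h1 : Real.log ((3:ℝ)^9) ≤ Real.log ((2:ℝ)^15) := by
            rw [Real.log_le_log_iff (by positivity) (by positivity)]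
            norm_num
          rw [Real.log_pow, Real.log_pow] at h1
          push_cast at h1
          simp only [List.length_cons, List.length_nil]
          push_cast
          linarith
        have hkey : ((n:ℝ) + (build d [a,b]).cost) ≤ (9/5) * ((n:ℝ) + t.cost) := by
          have hn : 5 * (n + (build d [a,b]).cost) ≤ 9 * (n + t.cost) := by
            rw [hcost]
            simp only [List.map_cons, List.map_nil, List.sum_cons, List.sum_nil] at hHS hSC
            omega
          have := Nat.cast_le (α := ℝ) |>.mpr hn
          push_cast at this
          linarith
        calc ((n:ℝ) + (build d [a,b]).cost) ≤ (9/5) * ((n:ℝ) + t.cost) := hkey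
          _ ≤ _ := mul_le_mul_of_nonneg_right hq hx
      by_cases hm3 : ys.length ≤ 3
      · -- m = 3
        have hm3' : ys.length = 3 := by omega
        have hd2 : d = 1 := by
          have : d ≤ 1 := by
            rw [hd]
            exact (Nat.clog_le_iff_le_pow h13).symm.mp (by omega)
          omega
        have hcost : (build d ys).cost ≤ 3 * hw (orv ys) := by
          have := build_cost' 0 ys (by omega)
          rw [hd2]
          simpa using this
        have hq : (3 : ℝ) ≤ 3 * Real.logb 2 ys.length / Real.logb 2 3 := by
          apply q_le_R
          rw [hm3']
          norm_num
        have hkey : ((n:ℝ) + (build d ys).cost) ≤ 3 * ((n:ℝ) + t.cost) := by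
          have hn : (n + (build d ys).cost) ≤ 3 * (n + t.cost) := by omega
          have := Nat.cast_le (α := ℝ) |>.mpr hn
          push_cast at this
          linarith
        calc ((n:ℝ) + (build d ys).cost) ≤ 3 * ((n:ℝ) + t.cost) := hkey
          _ ≤ _ := mul_le_mul_of_nonneg_right hq hx
      by_cases hm9 : ys.length ≤ 9
      · -- 4 ≤ m ≤ 9, d = 2
        have hd2 : d = 2 := by
          have h1 : d ≤ 2 := by
            rw [hd]
            exact (Nat.clog_le_iff_le_pow h13).symm.mp (by norm_num; omega)
          have h2 : ¬ d ≤ 1 := by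
            rw [hd]
            intro h
            have := (Nat.clog_le_iff_le_pow h13).symm.mpr h
            norm_num at this
            omega
          omega
        have hcost : (build d ys).cost ≤ 3 * hw (orv ys) + 3 * (ys.map hw).sum := by
          have := build_cost' 1 ys (by norm_num; omega)
          rw [hd2]
          calc (build 2 ys).cost ≤ 3 * hw (orv ys) + 3 * 1 * (ys.map hw).sum := this
            _ = _ := by ring
        have hq : (15/4 : ℝ) ≤ 3 * Real.logb 2 ys.length / Real.logb 2 3 := by
          apply q_le_R
          have h1 : Real.log ((3:ℝ)^15) ≤ Real.log ((4:ℝ)^12) := by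
            rw [Real.log_le_log_iff (by positivity) (by positivity)]
            norm_num
          rw [Real.log_pow, Real.log_pow] at h1
          have h2 : Real.log 4 ≤ Real.log ys.length := by
            rw [Real.log_le_log_iff (by norm_num) (by positivity)]
            · exact_mod_cast by omega
          push_cast at h1 ⊢
          nlinarith [Real.log_pos (show (1:ℝ) < 3 by norm_num)]
        have hkey : ((n:ℝ) + (build d ys).cost) ≤ (15/4) * ((n:ℝ) + t.cost) := by
          have hn : 4 * (n + (build d ys).cost) ≤ 15 * (n + t.cost) := by omega
          have := Nat.cast_le (α := ℝ) |>.mpr hn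
          push_cast at this
          linarith
        calc ((n:ℝ) + (build d ys).cost) ≤ (15/4) * ((n:ℝ) + t.cost) := hkey
          _ ≤ _ := mul_le_mul_of_nonneg_right hq hx
      · -- m ≥ 10, d ≥ 3
        have hd3 : 3 ≤ d := by
          by_contra h
          have : d ≤ 2 := by omega
          have := (Nat.clog_le_iff_le_pow h13).symm.mpr (hd ▸ this)
          norm_num at this
          omega
        obtain ⟨e, rfl⟩ : ∃ e, d = e + 1 := ⟨d - 1, by omega⟩
        have he2 : 2 ≤ e := by omega
        have hcost : (build (e+1) ys).cost ≤ 3 * hw (orv ys) + 3 * e * (ys.map hw).sum :=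
          build_cost' e ys hysd
        have hpow : 3 ^ e ≤ ys.length := by
          have := Nat.pow_pred_clog_lt_self h13 (show 1 < ys.length by omega)
          rw [← hd] at this
          simpa using this.le
        have hq : ((3 * e : ℕ) : ℝ) ≤ 3 * Real.logb 2 ys.length / Real.logb 2 3 := by
          apply q_le_R
          have := pow_log_le (show 0 < ys.length by omega) hpow
          push_cast
          linarith
        have hkey : ((n:ℝ) + (build (e+1) ys).cost) ≤ ((3 * e : ℕ) : ℝ) * ((n:ℝ) + t.cost) := by
          have hn : (n + (build (e+1) ys).cost) ≤ 3 * e * (n + t.cost) := by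
            have h1 : 3 * e * (ys.map hw).sum ≤ 3 * e * t.cost :=
              Nat.mul_le_mul_left _ hSC
            have h2 : 3 * e * (n + t.cost) = 3 * e * n + 3 * e * t.cost := by ring
            have h3 : n + 3 * hw (orv ys) ≤ 3 * e * n := by
              have : 4 * n ≤ 3 * e * n := Nat.mul_le_mul_right n (by omega)
              omega
            omega
          have := Nat.cast_le (α := ℝ) |>.mpr hn
          push_cast at this ⊢
          linarith
        calc ((n:ℝ) + (build (e+1) ys).cost) ≤ _ := hkey
          _ ≤ _ := mul_le_mul_of_nonneg_right hq hx
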